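/- Bounded inverse theorem for PN-spaces: Let (V, ν) and (W, μ) be strongly complete Šerstnev PN-spaces under τ_M, and let T : V → W be a continuous linear bijection. Then T⁻¹ : W → V is continuous. -/

import Mathlib

open Filter Topology Set

noncomputable section

/-- A distance distribution function: nondecreasing, with values in `[0,1]`,
left-continuous, `F 0 = 0` and `sup F = 1`. -/
def IsDDF (F : ℝ → ℝ) : Prop :=
  Monotone F ∧ (∀ t, F t ∈ Set.Icc (0:ℝ) 1) ∧
  (∀ t : ℝ, Tendsto F (nhdsWithin t (Set.Iio t)) (nhds (F t))) ∧
  F 0 = 0 ∧ (⨆ t, F t) = 1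

/-- A proper d.f.: `F t → 1` as `t → ∞`. -/
def IsProper (F : ℝ → ℝ) : Prop := Tendsto F atTop (nhds 1)

/-- The unit step function at `0`. -/
def H0 : ℝ → ℝ := fun t => if 0 < t then 1 else 0

/-- The quantile function `F̂(w) = sup {t | F t < w}`, valued in `EReal`. -/
noncomputable def qhat (F : ℝ → ℝ) (w : ℝ) : EReal :=
  sSup ((fun t : ℝ => (t : EReal)) '' {t | F t < w})

/-- The triangle function `τ_M(F,G)(x) = sup_{s+t=x} min (F s) (G t)`. -/
noncomputable def tauM (F G : ℝ → ℝ) : ℝ → ℝ :=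
  fun x => ⨆ s : ℝ, min (F s) (G (x - s))

/-- A Šerstnev probabilistic normed space under `τ_M`, with all `ν_x` proper. -/
structure SPN (V : Type*) [AddCommGroup V] [Module ℝ V] where
  nu : V → ℝ → ℝ
  ddf : ∀ x, IsDDF (nu x)
  proper : ∀ x, IsProper (nu x)
  nu_eq_iff : ∀ x, nu x = H0 ↔ x = 0
  nu_add : ∀ x y t, tauM (nu x) (nu y) t ≤ nu (x + y) t
  nu_smul : ∀ a : ℝ, a ≠ 0 → ∀ x t, nu (a • x) t = nu x (t / |a|)

/-- The quantile seminorm `‖x‖_w = sup {t | ν_x t < w}`. -/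
noncomputable def pnorm {V : Type*} [AddCommGroup V] [Module ℝ V]
    (S : SPN V) (x : V) (w : ℝ) : ℝ :=
  sSup {t | S.nu x t < w}

/-- The strong topology of a PN-space, generated by the balls of the seminorms `‖·‖_w`. -/
def strongTop {V : Type*} [AddCommGroup V] [Module ℝ V] (S : SPN V) : TopologicalSpace V :=
  TopologicalSpace.generateFrom
    {U | ∃ (x : V) (w r : ℝ), w ∈ Set.Ioo (0:ℝ) 1 ∧ 0 < r ∧
      U = {y | pnorm S (y - x) w < r}}

/-- A strong Cauchy sequence. -/
def StrongCauchy {V : Type*} [AddCommGroup V] [Module ℝ V] (S : SPN V) (x : ℕ → V) : Prop :=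
  ∀ t : ℝ, 0 < t → ∃ N, ∀ m ≥ N, ∀ n ≥ N, 1 - t < S.nu (x n - x m) t

/-- Strong convergence of a sequence to a point. -/
def StrongLim {V : Type*} [AddCommGroup V] [Module ℝ V] (S : SPN V) (x : ℕ → V) (p : V) : Prop :=
  ∀ t : ℝ, 0 < t → ∃ N, ∀ n ≥ N, 1 - t < S.nu (x n - p) t

/-- Strong completeness: every strong Cauchy sequence strongly converges. -/
def StrongComplete {V : Type*} [AddCommGroup V] [Module ℝ V] (S : SPN V) : Prop :=
  ∀ x : ℕ → V, StrongCauchy S x → ∃ p, StrongLim S x p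

section Lemmas

variable {V : Type*} [AddCommGroup V] [Module ℝ V] (S : SPN V)

lemma nu_nonneg (x : V) (t : ℝ) : 0 ≤ S.nu x t := ((S.ddf x).2.1 t).1
lemma nu_le_one (x : V) (t : ℝ) : S.nu x t ≤ 1 := ((S.ddf x).2.1 t).2
lemma nu_mono (x : V) : Monotone (S.nu x) := (S.ddf x).1
lemma nu_zero (x : V) : S.nu x 0 = 0 := (S.ddf x).2.2.2.1

lemma pnorm_set_nonempty (x : V) {w : ℝ} (hw : 0 < w) :
    {t | S.nu x t < w}.Nonempty := ⟨0, by simpa [nu_zero] using hw⟩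

lemma pnorm_set_bdd (x : V) {w : ℝ} (hw : w < 1) : BddAbove {t | S.nu x t < w} := by
  have h : ∀ᶠ t in atTop, w < S.nu x t := (S.proper x).eventually_const_lt hw
  obtain ⟨T0, hT⟩ := eventually_atTop.mp h
  exact ⟨T0, fun s hs => by
    by_contra hst
    exact absurd hs (not_lt.2 (hT s (le_of_not_ge hst)).le)⟩

lemma le_pnorm_of (x : V) {w t : ℝ} (hw : w < 1) (h : S.nu x t < w) : t ≤ pnorm S x w :=
  le_csSup (pnorm_set_bdd S x hw) h

lemma pnorm_nonneg (x : V) {w : ℝ} (hw : w ∈ Ioo (0:ℝ) 1) : 0 ≤ pnorm S x w :=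
  le_pnorm_of S x hw.2 (by simpa [nu_zero] using hw.1)

lemma nu_of_pnorm_lt {x : V} {w t : ℝ} (hw : w < 1) (h : pnorm S x w < t) : w ≤ S.nu x t := by
  by_contra hc
  exact absurd (le_pnorm_of S x hw (lt_of_not_ge hc)) (not_le.2 h)

lemma pnorm_le_of {x : V} {w t : ℝ} (hw : 0 < w) (h : w ≤ S.nu x t) : pnorm S x w ≤ t := by
  refine csSup_le (pnorm_set_nonempty S x hw) (fun s hs => ?_)
  by_contra hst
  exact absurd hs (not_lt.2 (le_trans h (nu_mono S x (le_of_not_ge hst))))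

lemma pnorm_zero {w : ℝ} (hw : w ∈ Ioo (0:ℝ) 1) : pnorm S (0 : V) w = 0 := by
  have h0 : S.nu 0 = H0 := (S.nu_eq_iff 0).mpr rfl
  have : {t | S.nu (0:V) t < w} = Iic 0 := by
    ext t
    simp only [h0, H0, mem_setOf_eq, mem_Iic]
    by_cases ht : 0 < t
    · simp [ht, not_lt.2 hw.2.le, not_le.2 ht]
    · simpa [ht] using ⟨fun _ => not_lt.1 ht, fun _ => hw.1⟩
  rw [pnorm, this, csSup_Iic]

lemma pnorm_smul (a : ℝ) (ha : a ≠ 0) (x : V) {w : ℝ} (hw : w ∈ Ioo (0:ℝ) 1) :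
    pnorm S (a • x) w = |a| * pnorm S x w := by
  have ha' : (0:ℝ) < |a| := abs_pos.2 ha
  have himg : {t | S.nu (a • x) t < w} = (fun t => |a| * t) '' {t | S.nu x t < w} := by
    ext t
    simp only [S.nu_smul a ha, mem_setOf_eq, mem_image]
    constructor
    · intro h; exact ⟨t / |a|, h, by field_simp⟩
    · rintro ⟨s, hs, rfl⟩
      rwa [mul_div_cancel_left₀ _ ha'.ne']
  rw [pnorm, himg,
    ← Monotone.map_csSup_of_continuousAt (f := fun t => |a| * t)
      (by fun_prop) (fun u v huv => by dsimp; nlinarith)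
      (pnorm_set_nonempty S x hw.1) (pnorm_set_bdd S x hw.2)]
  rfl

lemma pnorm_neg (x : V) {w : ℝ} (hw : w ∈ Ioo (0:ℝ) 1) : pnorm S (-x) w = pnorm S x w := by
  have := pnorm_smul S (-1) (by norm_num) x hw
  simpa using this

lemma pnorm_add_le (x y : V) {w : ℝ} (hw : w ∈ Ioo (0:ℝ) 1) :
    pnorm S (x + y) w ≤ pnorm S x w + pnorm S y w := by
  refine csSup_le (pnorm_set_nonempty S _ hw.1) (fun u hu => ?_)
  by_contra hc
  push_neg at hc
  set d := (u - pnorm S x w - pnorm S y w) / 2 with hd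
  have hd0 : 0 < d := by simp only [hd]; linarith
  set s := pnorm S x w + d with hs
  have h1 : w ≤ S.nu x s := nu_of_pnorm_lt S hw.2 (by simp [hs]; linarith)
  have h2 : w ≤ S.nu y (u - s) := nu_of_pnorm_lt S hw.2 (by simp [hs, hd]; linarith)
  have hbdd : BddAbove (range fun s' => min (S.nu x s') (S.nu y (u - s'))) :=
    ⟨1, by rintro _ ⟨s', rfl⟩; exact le_trans (min_le_left _ _) (nu_le_one S x s')⟩
  have : w ≤ tauM (S.nu x) (S.nu y) u :=
    le_trans (le_min h1 h2) (le_ciSup hbdd s)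
  have := le_trans this (S.nu_add x y u)
  exact absurd hu (not_lt.2 this)

lemma pnorm_mono_w (x : V) {w w' : ℝ} (h0 : 0 < w) (h : w ≤ w') (h1 : w' < 1) :
    pnorm S x w ≤ pnorm S x w' :=
  csSup_le_csSup (pnorm_set_bdd S x h1) (pnorm_set_nonempty S x h0)
    (fun t ht => lt_of_lt_of_le ht h)

lemma exists_pnorm_pos {x : V} (hx : x ≠ 0) : ∃ w ∈ Ioo (0:ℝ) 1, 0 < pnorm S x w := by
  have hne : S.nu x ≠ H0 := fun h => hx ((S.nu_eq_iff x).mp h)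
  have : ∃ t, S.nu x t ≠ H0 t := by
    by_contra hc; push_neg at hc; exact hne (funext hc)
  obtain ⟨t, ht⟩ := this
  have ht0 : 0 < t := by
    by_contra hc
    push_neg at hc
    have h1 : S.nu x t ≤ 0 := (nu_zero S x) ▸ nu_mono S x hc
    have h2 : S.nu x t = 0 := le_antisymm h1 (nu_nonneg S x t)
    exact ht (by simp [h2, H0, not_lt.2 hc])
  have hH : H0 t = 1 := by simp [H0, ht0]
  have hlt : S.nu x t < 1 := lt_of_le_of_ne (nu_le_one S x t) (hH ▸ ht)
  refine ⟨(S.nu x t + 1) / 2, ⟨by nlinarith [nu_nonneg S x t], by linarith⟩, ?_⟩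
  exact lt_of_lt_of_le ht0 (le_pnorm_of S x (by linarith) (by linarith))

lemma pnorm_finset_sum {ι : Type*} (s : Finset ι) (f : ι → V) {w : ℝ} (hw : w ∈ Ioo (0:ℝ) 1) :
    pnorm S (∑ i ∈ s, f i) w ≤ ∑ i ∈ s, pnorm S (f i) w := by
  classical
  induction s using Finset.induction_on with
  | empty => simp [pnorm_zero S hw]
  | insert _ _ hnot ih =>
    rename_i a s'
    rw [Finset.sum_insert hnot, Finset.sum_insert hnot]
    exact le_trans (pnorm_add_le S _ _ hw) (by linarith)

end Lemmas

section Top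

variable {V : Type*} [AddCommGroup V] [Module ℝ V] (S : SPN V)

lemma strong_isOpen_iff (U : Set V) :
    IsOpen[strongTop S] U ↔
      ∀ p ∈ U, ∃ w ∈ Ioo (0:ℝ) 1, ∃ r > 0, {y | pnorm S (y - p) w < r} ⊆ U := by
  constructor
  · intro h
    induction h with
    | basic u hu =>
      obtain ⟨x, w, r, hw, hr, rfl⟩ := hu
      intro p hp
      simp only [mem_setOf_eq] at hp
      refine ⟨w, hw, r - pnorm S (p - x) w, by linarith, fun y hy => ?_⟩
      simp only [mem_setOf_eq] at hy ⊢
      have := pnorm_add_le S (y - p) (p - x) hw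
      rw [sub_add_sub_cancel] at this
      linarith
    | univ => exact fun p _ => ⟨1/2, by norm_num, 1, one_pos, subset_univ _⟩
    | inter u v _ _ ihu ihv =>
      intro p hp
      obtain ⟨w1, hw1, r1, hr1, h1⟩ := ihu p hp.1
      obtain ⟨w2, hw2, r2, hr2, h2⟩ := ihv p hp.2
      refine ⟨max w1 w2, ⟨lt_max_of_lt_left hw1.1, max_lt hw1.2 hw2.2⟩,
        min r1 r2, lt_min hr1 hr2, fun y hy => ?_⟩
      simp only [mem_setOf_eq] at hy
      constructor
      · exact h1 (lt_of_le_of_lt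
          (pnorm_mono_w S _ hw1.1 (le_max_left _ _) (max_lt hw1.2 hw2.2))
          (lt_of_lt_of_le hy (min_le_left _ _)))
      · exact h2 (lt_of_le_of_lt
          (pnorm_mono_w S _ hw2.1 (le_max_right _ _) (max_lt hw1.2 hw2.2))
          (lt_of_lt_of_le hy (min_le_right _ _)))
    | sUnion s _ ih =>
      intro p hp
      obtain ⟨u, hu, hpu⟩ := hp
      obtain ⟨w, hw, r, hr, hsub⟩ := ih u hu p hpu
      exact ⟨w, hw, r, hr, hsub.trans (subset_sUnion_of_mem hu)⟩
  · intro h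
    choose w hw r hr hsub using h
    letI := strongTop S
    have : U = ⋃ (p : U), {y | pnorm S (y - (p:V)) (w p p.2) < r p p.2} := by
      apply Subset.antisymm
      · intro y hy
        exact mem_iUnion.2 ⟨⟨y, hy⟩, by
          simp only [mem_setOf_eq, sub_self, pnorm_zero S (hw y hy)]; exact hr y hy⟩
      · exact iUnion_subset fun p => hsub p p.2
    rw [this]
    exact isOpen_iUnion fun p =>
      TopologicalSpace.isOpen_generateFrom_of_mem ⟨p, w p p.2, r p p.2, hw p p.2, hr p p.2, rfl⟩

lemma isOpen_pnorm_ball (x : V) {w r : ℝ} (hw : w ∈ Ioo (0:ℝ) 1) (hr : 0 < r) :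
    IsOpen[strongTop S] {y | pnorm S (y - x) w < r} := by
  rw [strong_isOpen_iff]
  intro p hp
  simp only [mem_setOf_eq] at hp
  refine ⟨w, hw, r - pnorm S (p - x) w, by linarith, fun y hy => ?_⟩
  simp only [mem_setOf_eq] at hy ⊢
  have := pnorm_add_le S (y - p) (p - x) hw
  rw [sub_add_sub_cancel] at this
  linarith

lemma mem_strong_closure_iff (A : Set V) (z : V) :
    z ∈ @closure V (strongTop S) A ↔
      ∀ w ∈ Ioo (0:ℝ) 1, ∀ r > 0, ∃ a ∈ A, pnorm S (a - z) w < r := by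
  letI := strongTop S
  rw [mem_closure_iff]
  constructor
  · intro h w hw r hr
    obtain ⟨a, ha, haA⟩ := h _ (isOpen_pnorm_ball S z hw hr)
      (by simp [pnorm_zero S hw, hr])
    exact ⟨a, haA, ha⟩
  · intro h o ho hz
    obtain ⟨w, hw, r, hr, hsub⟩ := (strong_isOpen_iff S o).mp ho z hz
    obtain ⟨a, haA, ha⟩ := h w hw r hr
    exact ⟨a, hsub ha, haA⟩

/-- conversion: pnorm-ball smallness at special level implies ν-form -/
lemma nu_form_of_pnorm {z : V} {t : ℝ} (ht : 0 < t)
    (h : pnorm S z (max (1 - t/2) 2⁻¹) < t) : 1 - t < S.nu z t := by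
  have hw2 : max (1 - t/2) 2⁻¹ < 1 := max_lt (by linarith) (by norm_num)
  have := nu_of_pnorm_lt S hw2 h
  have h2 : (1:ℝ) - t/2 ≤ max (1 - t/2) 2⁻¹ := le_max_left _ _
  linarith

lemma max_mem_Ioo {t : ℝ} (ht : 0 < t) : max (1 - t/2) 2⁻¹ ∈ Ioo (0:ℝ) 1 :=
  ⟨lt_max_of_lt_right (by norm_num), max_lt (by linarith) (by norm_num)⟩

/-- conversion: ν-form at special t implies pnorm-ball smallness -/
lemma pnorm_of_nu_form {z : V} {w r : ℝ} (hw : w ∈ Ioo (0:ℝ) 1) (hr : 0 < r)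
    (h : 1 - min (r/2) ((1-w)/2) < S.nu z (min (r/2) ((1-w)/2))) : pnorm S z w < r := by
  set t := min (r/2) ((1-w)/2) with htdef
  have ht1 : t ≤ (1-w)/2 := min_le_right _ _
  have hwt : w < 1 - t := by
    have := hw.2; simp only [htdef]; nlinarith [min_le_right (r/2) ((1-w)/2)]
  have : w ≤ S.nu z t := le_of_lt (hwt.trans h)
  calc pnorm S z w ≤ t := pnorm_le_of S hw.1 this
    _ ≤ r/2 := min_le_left _ _
    _ < r := by linarith

lemma min_pos {r w : ℝ} (hr : 0 < r) (hw : w < 1) : 0 < min (r/2) ((1-w)/2) :=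
  lt_min (by linarith) (by linarith)

end Top

section Metric

def wseqn (n : ℕ) : ℝ := 1 - ((n:ℝ) + 2)⁻¹

lemma wseqn_mem (n : ℕ) : wseqn n ∈ Ioo (0:ℝ) 1 := by
  have h2 : (0:ℝ) < (n:ℝ) + 2 := by positivity
  have h3 : ((n:ℝ) + 2)⁻¹ ≤ 2⁻¹ := by
    apply inv_anti₀ (by norm_num)
    nlinarith [Nat.cast_nonneg (α := ℝ) n]
  constructor
  · simp only [wseqn]; nlinarith [inv_pos.2 h2]
  · simp only [wseqn]; nlinarith [inv_pos.2 h2]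

lemma wseqn_mono : Monotone wseqn := by
  intro m n hmn
  simp only [wseqn, sub_le_sub_iff_left]
  apply inv_anti₀ (by positivity)
  have : (m:ℝ) ≤ (n:ℝ) := Nat.cast_le.2 hmn
  linarith

lemma exists_wseqn_ge {w : ℝ} (hw : w < 1) : ∃ n, w ≤ wseqn n := by
  obtain ⟨n, hn⟩ := exists_nat_ge ((1 - w)⁻¹)
  refine ⟨n, ?_⟩
  have h1 : (0:ℝ) < 1 - w := by linarith
  have h2 : (0:ℝ) < (n:ℝ) + 2 := by positivity
  have : ((n:ℝ) + 2)⁻¹ ≤ 1 - w := by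
    rw [inv_le_comm₀ h2 h1]
    calc (1 - w)⁻¹ ≤ (n:ℝ) := hn
      _ ≤ (n:ℝ) + 2 := by linarith
  simp only [wseqn]; linarith

variable {W : Type*} [AddCommGroup W] [Module ℝ W] (S' : SPN W)

noncomputable def mdist (x y : W) : ℝ :=
  ∑' n : ℕ, (2:ℝ)⁻¹ ^ n * min 1 (pnorm S' (x - y) (wseqn n))

lemma mdist_term_nonneg (z : W) (n : ℕ) :
    0 ≤ (2:ℝ)⁻¹ ^ n * min 1 (pnorm S' z (wseqn n)) := by
  apply mul_nonneg (by positivity)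
  exact le_min (by norm_num) (pnorm_nonneg S' z (wseqn_mem n))

lemma mdist_term_le (z : W) (n : ℕ) :
    (2:ℝ)⁻¹ ^ n * min 1 (pnorm S' z (wseqn n)) ≤ (2:ℝ)⁻¹ ^ n := by
  nlinarith [min_le_left (1:ℝ) (pnorm S' z (wseqn n)), pow_pos (by norm_num : (0:ℝ) < 2⁻¹) n]

lemma mdist_summable (z : W) :
    Summable (fun n : ℕ => (2:ℝ)⁻¹ ^ n * min 1 (pnorm S' z (wseqn n))) :=
  Summable.of_nonneg_of_le (mdist_term_nonneg S' z) (mdist_term_le S' z)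
    (summable_geometric_of_lt_one (by norm_num) (by norm_num))

lemma mdist_self (x : W) : mdist S' x x = 0 := by
  simp [mdist, pnorm_zero S' (wseqn_mem _)]

lemma mdist_comm (x y : W) : mdist S' x y = mdist S' y x := by
  unfold mdist
  congr 1
  ext n
  rw [show x - y = -(y - x) by abel, pnorm_neg S' _ (wseqn_mem n)]

lemma min_one_subadd {a b c : ℝ} (hb : 0 ≤ b) (hc : 0 ≤ c) (h : a ≤ b + c) :
    min 1 a ≤ min 1 b + min 1 c := by
  rcases le_or_gt 1 b with hb1 | hb1
  · have : min 1 b = 1 := min_eq_left hb1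
    nlinarith [min_le_left (1:ℝ) a, le_min (by norm_num : (0:ℝ) ≤ 1) hc]
  · rcases le_or_gt 1 c with hc1 | hc1
    · have : min 1 c = 1 := min_eq_left hc1
      nlinarith [min_le_left (1:ℝ) a, le_min (by norm_num : (0:ℝ) ≤ 1) hb]
    · rw [min_eq_right hb1.le, min_eq_right hc1.le]
      exact le_trans (min_le_right _ _) h

lemma mdist_triangle (x y z : W) : mdist S' x z ≤ mdist S' x y + mdist S' y z := by
  unfold mdist
  rw [← Summable.tsum_add (mdist_summable S' (x - y)) (mdist_summable S' (y - z))]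
  apply Summable.tsum_le_tsum _ (mdist_summable S' (x - z))
    ((mdist_summable S' (x - y)).add (mdist_summable S' (y - z)))
  intro n
  rw [← mul_add]
  apply mul_le_mul_of_nonneg_left _ (by positivity)
  apply min_one_subadd (pnorm_nonneg S' _ (wseqn_mem n)) (pnorm_nonneg S' _ (wseqn_mem n))
  calc pnorm S' (x - z) (wseqn n) = pnorm S' ((x - y) + (y - z)) (wseqn n) := by abel_nf
    _ ≤ _ := pnorm_add_le S' _ _ (wseqn_mem n)

lemma pnorm_lt_of_mdist_lt {x y : W} {n : ℕ} {r : ℝ}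
    (h : mdist S' x y < (2:ℝ)⁻¹ ^ n * min 1 r) : pnorm S' (x - y) (wseqn n) < r := by
  have hterm : (2:ℝ)⁻¹ ^ n * min 1 (pnorm S' (x - y) (wseqn n)) ≤ mdist S' x y :=
    Summable.le_tsum (mdist_summable S' (x - y)) n (fun i _ => mdist_term_nonneg S' _ i)
  have hlt : min 1 (pnorm S' (x - y) (wseqn n)) < min 1 r := by
    have hp : (0:ℝ) < (2:ℝ)⁻¹ ^ n := by positivity
    nlinarith
  rcases le_or_gt 1 (pnorm S' (x - y) (wseqn n)) with h1 | h1
  · exfalso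
    rw [min_eq_left h1] at hlt
    exact absurd (min_le_left (1:ℝ) r) (not_le.2 hlt)
  · rw [min_eq_right h1.le] at hlt
    exact lt_of_lt_of_le hlt (min_le_right _ _)

lemma range_geom_sum_le (n : ℕ) : ∑ k ∈ Finset.range n, (2:ℝ)⁻¹ ^ k ≤ 2 := by
  have := sum_geometric_two_le n
  simpa [one_div] using this

lemma mdist_lt_of_pnorm {ε : ℝ} (hε : 0 < ε) :
    ∃ (n : ℕ) (δ : ℝ), 0 < δ ∧ ∀ x y : W,
      pnorm S' (x - y) (wseqn n) < δ → mdist S' x y < ε := by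
  obtain ⟨n, hn⟩ := exists_pow_lt_of_lt_one (show (0:ℝ) < ε/4 by linarith)
    (by norm_num : (2:ℝ)⁻¹ < 1)
  refine ⟨n, ε/8, by linarith, fun x y hxy => ?_⟩
  have hsplit := Summable.sum_add_tsum_nat_add (n + 1) (mdist_summable S' (x - y))
  have hhead : ∑ k ∈ Finset.range (n+1), (2:ℝ)⁻¹ ^ k * min 1 (pnorm S' (x - y) (wseqn k))
      ≤ 2 * (ε/8) := by
    have hterm : ∀ k ∈ Finset.range (n+1),
        (2:ℝ)⁻¹ ^ k * min 1 (pnorm S' (x - y) (wseqn k)) ≤ (2:ℝ)⁻¹ ^ k * (ε/8) := by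
      intro k hk
      apply mul_le_mul_of_nonneg_left _ (by positivity)
      refine le_trans (min_le_right _ _) (le_trans ?_ hxy.le)
      exact pnorm_mono_w S' _ (wseqn_mem k).1 (wseqn_mono (Finset.mem_range_succ_iff.1 hk))
        (wseqn_mem n).2
    calc _ ≤ ∑ k ∈ Finset.range (n+1), (2:ℝ)⁻¹ ^ k * (ε/8) := Finset.sum_le_sum hterm
      _ = (∑ k ∈ Finset.range (n+1), (2:ℝ)⁻¹ ^ k) * (ε/8) := by rw [← Finset.sum_mul]
      _ ≤ 2 * (ε/8) := by
          apply mul_le_mul_of_nonneg_right (range_geom_sum_le _) (by linarith)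
  have htail : (∑' k : ℕ, (2:ℝ)⁻¹ ^ (k + (n+1)) * min 1 (pnorm S' (x - y) (wseqn (k + (n+1)))))
      ≤ (2:ℝ)⁻¹ ^ n := by
    have hsum2 : Summable (fun k : ℕ => (2:ℝ)⁻¹ ^ (k + (n+1))) := by
      apply Summable.comp_injective (summable_geometric_of_lt_one (by norm_num) (by norm_num))
      exact fun a b h => by omega
    calc _ ≤ ∑' k : ℕ, (2:ℝ)⁻¹ ^ (k + (n+1)) := by
          apply Summable.tsum_le_tsum (fun k => mdist_term_le S' _ _) _ hsum2
          exact ((mdist_summable S' (x - y)).comp_injective (fun a b h => by omega))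
      _ = (2:ℝ)⁻¹ ^ (n+1) * ∑' k : ℕ, (2:ℝ)⁻¹ ^ k := by
          rw [tsum_mul_left.symm]
          congr 1; ext k; rw [pow_add, mul_comm]
      _ = (2:ℝ)⁻¹ ^ (n+1) * 2 := by
          rw [tsum_geometric_of_lt_one (by norm_num) (by norm_num)]; norm_num
      _ = (2:ℝ)⁻¹ ^ n := by rw [pow_succ]; ring
  have : mdist S' x y ≤ 2 * (ε/8) + (2:ℝ)⁻¹ ^ n := by
    rw [mdist, ← hsplit]
    exact add_le_add hhead htail
  calc mdist S' x y ≤ 2 * (ε/8) + (2:ℝ)⁻¹ ^ n := this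
    _ < ε/4 + ε/4 := by linarith [hn]
    _ ≤ ε := by linarith

end Metric

section Baire

variable {V : Type*} [AddCommGroup V] [Module ℝ V] {W : Type*} [AddCommGroup W] [Module ℝ W]

lemma cont_at_zero (S : SPN V) (S' : SPN W) (T : V →ₗ[ℝ] W)
    (hTc : @Continuous V W (strongTop S) (strongTop S') T) :
    ∀ w' ∈ Ioo (0:ℝ) 1, ∀ r' > 0, ∃ w ∈ Ioo (0:ℝ) 1, ∃ ρ > 0,
      ∀ z : V, pnorm S z w < ρ → pnorm S' (T z) w' < r' := by
  letI := strongTop S; letI := strongTop S'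
  intro w' hw' r' hr'
  have hopen : IsOpen (T ⁻¹' {y | pnorm S' (y - 0) w' < r'}) :=
    (isOpen_pnorm_ball S' 0 hw' hr').preimage hTc
  have h0 : (0:V) ∈ T ⁻¹' {y | pnorm S' (y - 0) w' < r'} := by
    simp [map_zero, pnorm_zero S' hw', hr']
  obtain ⟨w, hw, ρ, hρ, hsub⟩ := (strong_isOpen_iff S _).mp hopen 0 h0
  refine ⟨w, hw, ρ, hρ, fun z hz => ?_⟩
  have := hsub (show z ∈ {y | pnorm S (y - 0) w < ρ} by simpa using hz)
  simpa using this

lemma baire_lemma (S : SPN V) (S' : SPN W) (T : V →ₗ[ℝ] W)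
    (hsurj : Function.Surjective T) (hB : @BaireSpace W (strongTop S'))
    {w r : ℝ} (hw : w ∈ Ioo (0:ℝ) 1) (hr : 0 < r) :
    ∃ w' ∈ Ioo (0:ℝ) 1, ∃ r' > 0, ∀ u : W, pnorm S' u w' < r' →
      u ∈ @closure W (strongTop S') (T '' {x | pnorm S x w < r}) := by
  letI := strongTop S'
  haveI := hB
  haveI : Nonempty W := ⟨0⟩
  set B : ℝ → Set V := fun ρ => {x | pnorm S x w < ρ} with hB
  -- Baire category: some closure (T '' B ((n+1) * (r/2))) has nonempty interior
  have hcover : ⋃ n : ℕ, closure (T '' B (((n:ℝ) + 1) * (r/2))) = univ := by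
    refine eq_univ_of_forall (fun y => ?_)
    obtain ⟨x, rfl⟩ := hsurj y
    obtain ⟨n, hn⟩ := exists_nat_gt (pnorm S x w / (r/2))
    refine mem_iUnion.2 ⟨n, subset_closure ⟨x, ?_, rfl⟩⟩
    have : pnorm S x w < (n:ℝ) * (r/2) := by
      rw [div_lt_iff₀ (by linarith)] at hn
      linarith
    simp only [B, mem_setOf_eq]
    nlinarith
  obtain ⟨n, y₀, hy₀⟩ := nonempty_interior_of_iUnion_of_closed
    (fun n : ℕ => isClosed_closure) hcover
  set R : ℝ := ((n:ℝ) + 1) * (r/2) with hR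
  have hRpos : 0 < R := by positivity
  obtain ⟨w₁, hw₁, r₁, hr₁, hsub⟩ :=
    (strong_isOpen_iff S' _).mp isOpen_interior y₀ hy₀
  have hsubc : {y | pnorm S' (y - y₀) w₁ < r₁} ⊆ closure (T '' B R) :=
    hsub.trans interior_subset
  -- step 1: ball of radius r₁ around 0 is in closure (T '' B (2 * R))
  have hstep1 : ∀ u : W, pnorm S' u w₁ < r₁ → u ∈ closure (T '' B (2 * R)) := by
    intro u hu
    have ha : u + y₀ ∈ closure (T '' B R) := hsubc (by simpa using hu)
    have hb : y₀ ∈ closure (T '' B R) := hsubc (by simp [pnorm_zero S' hw₁, hr₁])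
    rw [mem_strong_closure_iff]
    intro w₂ hw₂ r₂ hr₂
    obtain ⟨a', ⟨xa, hxa, rfl⟩, ha'⟩ :=
      (mem_strong_closure_iff S' _ _).mp ha w₂ hw₂ (r₂/2) (by linarith)
    obtain ⟨b', ⟨xb, hxb, rfl⟩, hb'⟩ :=
      (mem_strong_closure_iff S' _ _).mp hb w₂ hw₂ (r₂/2) (by linarith)
    refine ⟨T (xa - xb), ⟨xa - xb, ?_, rfl⟩, ?_⟩
    · simp only [B, mem_setOf_eq] at hxa hxb ⊢
      have h1 : pnorm S (xa - xb) w ≤ pnorm S xa w + pnorm S (-xb) w := by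
        have := pnorm_add_le S xa (-xb) hw
        simpa [sub_eq_add_neg] using this
      rw [pnorm_neg S xb hw] at h1
      linarith
    · have hkey : T (xa - xb) - u = (T xa - (u + y₀)) + -(T xb - y₀) := by
        rw [map_sub]; abel
      rw [hkey]
      have := pnorm_add_le S' (T xa - (u + y₀)) (-(T xb - y₀)) hw₂
      rw [pnorm_neg S' _ hw₂] at this
      linarith
  -- step 2: rescale
  have hnpos : (0:ℝ) < (n:ℝ) + 1 := by positivity
  refine ⟨w₁, hw₁, r₁ / ((n:ℝ) + 1), by positivity, fun u hu => ?_⟩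
  have hcu : pnorm S' (((n:ℝ) + 1) • u) w₁ < r₁ := by
    rw [pnorm_smul S' _ hnpos.ne' u hw₁, abs_of_pos hnpos]
    rw [lt_div_iff₀ hnpos] at hu
    linarith
  have h2R : ((n:ℝ) + 1) • u ∈ closure (T '' B (2 * R)) := hstep1 _ hcu
  rw [mem_strong_closure_iff]
  intro w₂ hw₂ r₂ hr₂
  obtain ⟨a', ⟨xa, hxa, rfl⟩, ha'⟩ :=
    (mem_strong_closure_iff S' _ _).mp h2R w₂ hw₂ (((n:ℝ) + 1) * r₂) (by positivity)
  refine ⟨T ((((n:ℝ) + 1)⁻¹) • xa), ⟨(((n:ℝ) + 1)⁻¹) • xa, ?_, rfl⟩, ?_⟩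
  · simp only [B, mem_setOf_eq] at hxa ⊢
    rw [pnorm_smul S _ (by positivity : ((n:ℝ)+1)⁻¹ ≠ 0) xa hw,
      abs_of_pos (by positivity : (0:ℝ) < ((n:ℝ)+1)⁻¹)]
    have h2Rr : 2 * R = ((n:ℝ) + 1) * r := by rw [hR]; ring
    rw [h2Rr] at hxa
    calc ((n:ℝ)+1)⁻¹ * pnorm S xa w < ((n:ℝ)+1)⁻¹ * (((n:ℝ) + 1) * r) := by
          apply mul_lt_mul_of_pos_left hxa (by positivity)
      _ = r := by field_simp
  · have hkey : T ((((n:ℝ) + 1)⁻¹) • xa) - u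
        = (((n:ℝ) + 1)⁻¹) • (T xa - ((n:ℝ) + 1) • u) := by
      rw [map_smul, smul_sub, smul_smul]
      field_simp
      rw [one_smul]
    rw [hkey, pnorm_smul S' _ (by positivity : ((n:ℝ)+1)⁻¹ ≠ 0) _ hw₂,
      abs_of_pos (by positivity : (0:ℝ) < ((n:ℝ)+1)⁻¹)]
    calc ((n:ℝ)+1)⁻¹ * pnorm S' (T xa - ((n:ℝ) + 1) • u) w₂
        < ((n:ℝ)+1)⁻¹ * (((n:ℝ) + 1) * r₂) := by
          apply mul_lt_mul_of_pos_left ha' (by positivity)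
      _ = r₂ := by field_simp

end Baire

section Series

variable {V : Type*} [AddCommGroup V] [Module ℝ V] {W : Type*} [AddCommGroup W] [Module ℝ W]

lemma geo_Ico_le {m n : ℕ} (h : m ≤ n) :
    ∑ i ∈ Finset.Ico m n, (2:ℝ)⁻¹ ^ (i + 2) ≤ (2:ℝ)⁻¹ ^ (m + 1) - (2:ℝ)⁻¹ ^ (n + 1) := by
  induction n, h using Nat.le_induction with
  | base => simp
  | succ n hmn ih =>
    rw [Finset.sum_Ico_succ_top hmn]
    have : (2:ℝ)⁻¹ ^ (n + 2) = (2:ℝ)⁻¹ ^ (n + 1) - (2:ℝ)⁻¹ ^ (n + 2) := by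
      rw [pow_succ]; ring
    linarith [this, ih]

lemma series_lemma (S : SPN V) (S' : SPN W) (T : V →ₗ[ℝ] W)
    (hV : StrongComplete S)
    (hcont : ∀ w' ∈ Ioo (0:ℝ) 1, ∀ r' > 0, ∃ w ∈ Ioo (0:ℝ) 1, ∃ ρ > 0,
      ∀ z : V, pnorm S z w < ρ → pnorm S' (T z) w' < r')
    (hclos : ∀ w ∈ Ioo (0:ℝ) 1, ∀ ρ > 0, ∃ w' ∈ Ioo (0:ℝ) 1, ∃ r' > 0, ∀ u : W,
      pnorm S' u w' < r' → u ∈ @closure W (strongTop S') (T '' {x | pnorm S x w < ρ}))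
    {w r : ℝ} (hw : w ∈ Ioo (0:ℝ) 1) (hr : 0 < r) :
    ∃ w' ∈ Ioo (0:ℝ) 1, ∃ r' > 0, ∀ y : W, pnorm S' y w' < r' →
      ∃ x : V, pnorm S x w < r ∧ T x = y := by
  classical
  set wk : ℕ → ℝ := fun k => max w (wseqn k) with hwk
  have hwkm : ∀ k, wk k ∈ Ioo (0:ℝ) 1 :=
    fun k => ⟨lt_max_of_lt_left hw.1, max_lt hw.2 (wseqn_mem k).2⟩
  have hwwk : ∀ k, w ≤ wk k := fun k => le_max_left _ _
  set ρk : ℕ → ℝ := fun k => r * (2:ℝ)⁻¹ ^ (k + 2) with hρk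
  have hρkpos : ∀ k, 0 < ρk k := fun k => by positivity
  choose w'f hw'f r'f hr'f hclf using fun k : ℕ => hclos (wk k) (hwkm k) (ρk k) (hρkpos k)
  set Wk : ℕ → ℝ := fun k => max (w'f k) (wseqn k) with hWk
  have hWkm : ∀ k, Wk k ∈ Ioo (0:ℝ) 1 :=
    fun k => ⟨lt_max_of_lt_left (hw'f k).1, max_lt (hw'f k).2 (wseqn_mem k).2⟩
  set Rk : ℕ → ℝ := fun k => min (r'f k) (((k:ℝ) + 1)⁻¹) with hRk
  have hRkpos : ∀ k, 0 < Rk k := fun k => lt_min (hr'f k) (by positivity)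
  have hball : ∀ k (u : W), pnorm S' u (Wk k) < Rk k →
      u ∈ @closure W (strongTop S') (T '' {x | pnorm S x (wk k) < ρk k}) := by
    intro k u hu
    apply hclf k
    calc pnorm S' u (w'f k) ≤ pnorm S' u (Wk k) :=
          pnorm_mono_w S' u (hw'f k).1 (le_max_left _ _) (hWkm k).2
      _ < Rk k := hu
      _ ≤ r'f k := min_le_left _ _
  -- the recursive approximation step (totalized so we can use `choose`)
  have step : ∀ (k : ℕ) (e : W), ∃ x' : V, pnorm S' e (Wk k) < Rk k →
      pnorm S x' (wk k) < ρk k ∧ pnorm S' (e - T x') (Wk (k+1)) < Rk (k+1) := by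
    intro k e
    by_cases h : pnorm S' e (Wk k) < Rk k
    · have he := hball k e h
      obtain ⟨a, ⟨x', hx', rfl⟩, ha⟩ := (mem_strong_closure_iff S' _ _).mp he
        (Wk (k+1)) (hWkm (k+1)) (Rk (k+1)) (hRkpos (k+1))
      refine ⟨x', fun _ => ⟨hx', ?_⟩⟩
      have : e - T x' = -(T x' - e) := by abel
      rw [this, pnorm_neg S' _ (hWkm (k+1))]
      exact ha
    · exact ⟨0, fun hc => absurd hc h⟩
  choose F hF using step
  refine ⟨Wk 0, hWkm 0, Rk 0, hRkpos 0, fun y hy => ?_⟩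
  -- build the sequence of errors and increments
  set e : ℕ → W := fun k => Nat.rec y (fun k ek => ek - T (F k ek)) k with he
  have hestep : ∀ k, e (k+1) = e k - T (F k (e k)) := fun k => rfl
  have inv : ∀ k, pnorm S' (e k) (Wk k) < Rk k := by
    intro k
    induction k with
    | zero => exact hy
    | succ k ih =>
      rw [hestep k]
      exact (hF k (e k) ih).2
  set x : ℕ → V := fun k => F k (e k) with hx
  have hxk : ∀ k, pnorm S (x k) (wk k) < ρk k := fun k => (hF k (e k) (inv k)).1
  set s : ℕ → V := fun m => ∑ i ∈ Finset.range m, x i with hs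
  have he_eq : ∀ m, e m = y - T (s m) := by
    intro m
    induction m with
    | zero => simp [he, hs]
    | succ m ih =>
      have hsucc : s (m+1) = s m + x m := by simp [hs, Finset.sum_range_succ]
      rw [hestep m, hsucc, map_add]
      simp only [hx]
      rw [ih]
      abel
  -- partial-sum pnorm estimates
  have hsum_est : ∀ (w'' : ℝ), w'' ∈ Ioo (0:ℝ) 1 → ∀ m n : ℕ, m ≤ n →
      (∀ i, m ≤ i → w'' ≤ wk i) →
      pnorm S (s n - s m) w'' ≤ r * (2:ℝ)⁻¹ ^ (m + 1) := by
    intro w'' hw'' m n hmn hle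
    have hdiff : s n - s m = ∑ i ∈ Finset.Ico m n, x i := by
      rw [hs]
      simp only
      rw [Finset.sum_Ico_eq_sub _ hmn]
    rw [hdiff]
    calc pnorm S (∑ i ∈ Finset.Ico m n, x i) w''
        ≤ ∑ i ∈ Finset.Ico m n, pnorm S (x i) w'' := pnorm_finset_sum S _ _ hw''
      _ ≤ ∑ i ∈ Finset.Ico m n, r * (2:ℝ)⁻¹ ^ (i + 2) := by
          apply Finset.sum_le_sum
          intro i hi
          have him : m ≤ i := (Finset.mem_Ico.1 hi).1
          calc pnorm S (x i) w'' ≤ pnorm S (x i) (wk i) :=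
                pnorm_mono_w S _ hw''.1 (hle i him) (hwkm i).2
            _ ≤ r * (2:ℝ)⁻¹ ^ (i + 2) := (hxk i).le
      _ = r * ∑ i ∈ Finset.Ico m n, (2:ℝ)⁻¹ ^ (i + 2) := by rw [Finset.mul_sum]
      _ ≤ r * ((2:ℝ)⁻¹ ^ (m + 1) - (2:ℝ)⁻¹ ^ (n + 1)) := by
          apply mul_le_mul_of_nonneg_left (geo_Ico_le hmn) hr.le
      _ ≤ r * (2:ℝ)⁻¹ ^ (m + 1) := by
          have : (0:ℝ) < (2:ℝ)⁻¹ ^ (n + 1) := by positivity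
          nlinarith
  -- s is strongly Cauchy
  have hCauchy : StrongCauchy S s := by
    intro t ht
    obtain ⟨K₁, hK₁⟩ := exists_wseqn_ge (max_mem_Ioo ht).2
    obtain ⟨K₂, hK₂⟩ := exists_pow_lt_of_lt_one (div_pos ht hr) (by norm_num : (2:ℝ)⁻¹ < 1)
    refine ⟨max K₁ K₂, fun m hm n hn => ?_⟩
    have hbound : ∀ m' n' : ℕ, max K₁ K₂ ≤ m' → m' ≤ n' →
        pnorm S (s n' - s m') (max (1 - t/2) 2⁻¹) < t := by
      intro m' n' hm' hmn'
      have hle : ∀ i, m' ≤ i → max (1 - t/2) 2⁻¹ ≤ wk i := by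
        intro i hi
        calc max (1 - t/2) 2⁻¹ ≤ wseqn K₁ := hK₁
          _ ≤ wseqn i := wseqn_mono (le_trans (le_trans (le_max_left _ _) hm') hi)
          _ ≤ wk i := le_max_right _ _
      have h1 := hsum_est _ (max_mem_Ioo ht) m' n' hmn' hle
      have h2 : r * (2:ℝ)⁻¹ ^ (m' + 1) ≤ r * (2:ℝ)⁻¹ ^ K₂ := by
        apply mul_le_mul_of_nonneg_left _ hr.le
        apply pow_le_pow_of_le_one (by norm_num) (by norm_num)
        omega
      have h3 : r * (2:ℝ)⁻¹ ^ K₂ < t := by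
        rw [show t = r * (t / r) by field_simp]
        exact mul_lt_mul_of_pos_left hK₂ hr
      linarith
    rcases le_total m n with hmn | hnm
    · exact nu_form_of_pnorm S ht (hbound m n hm hmn)
    · have h9 := hbound n m hn hnm
      refine nu_form_of_pnorm S ht ?_
      rw [show s n - s m = -(s m - s n) by abel, pnorm_neg S _ (max_mem_Ioo ht)]
      exact h9
  obtain ⟨p, hp⟩ := hV s hCauchy
  -- convergence in each seminorm
  have hlim : ∀ w'' ∈ Ioo (0:ℝ) 1, ∀ ε > 0, ∃ N, ∀ m ≥ N,
      pnorm S (s m - p) w'' < ε := by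
    intro w'' hw'' ε hε
    obtain ⟨N, hN⟩ := hp (min (ε/2) ((1 - w'')/2)) (min_pos hε hw''.2)
    exact ⟨N, fun m hm => pnorm_of_nu_form S hw'' hε (hN m hm)⟩
  -- the limit p is in the ball of radius r
  have hpr : pnorm S p w < r := by
    obtain ⟨N₁, hN₁⟩ := hlim w hw (r/4) (by linarith)
    have h1 : pnorm S (s N₁ - p) w < r/4 := hN₁ N₁ le_rfl
    have h2 : pnorm S (s N₁) w ≤ r * (2:ℝ)⁻¹ ^ 1 := by
      have := hsum_est w hw 0 N₁ (Nat.zero_le _) (fun i _ => hwwk i)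
      simpa [hs] using this
    have h3 : pnorm S p w ≤ pnorm S (p - s N₁) w + pnorm S (s N₁) w := by
      have := pnorm_add_le S (p - s N₁) (s N₁) hw
      simpa using this
    have h4 : pnorm S (p - s N₁) w = pnorm S (s N₁ - p) w := by
      rw [show p - s N₁ = -(s N₁ - p) by abel, pnorm_neg S _ hw]
    rw [h4] at h3
    have : r * (2:ℝ)⁻¹ ^ 1 = r/2 := by ring
    linarith
  -- T p = y
  have hTp : T p = y := by
    by_contra hne
    have hne' : y - T p ≠ 0 := fun hc => hne (by rw [sub_eq_zero] at hc; exact hc.symm)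
    obtain ⟨w₂, hw₂, hpos⟩ := exists_pnorm_pos S' hne'
    have hsmall : ∀ ε > 0, pnorm S' (y - T p) w₂ < ε := by
      intro ε hε
      obtain ⟨w₃, hw₃, ρ₃, hρ₃, hT3⟩ := hcont w₂ hw₂ (ε/2) (by linarith)
      obtain ⟨N₂, hN₂⟩ := hlim w₃ hw₃ ρ₃ hρ₃
      obtain ⟨K₃, hK₃⟩ := exists_wseqn_ge hw₂.2
      obtain ⟨K₄, hK₄⟩ := exists_nat_gt (2/ε)
      set m := max N₂ (max K₃ K₄) with hm
      have hmN₂ : N₂ ≤ m := le_max_left _ _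
      have hmK₃ : K₃ ≤ m := le_trans (le_max_left _ _) (le_max_right _ _)
      have hmK₄ : K₄ ≤ m := le_trans (le_max_right _ _) (le_max_right _ _)
      -- term 1 : y - T (s m) = e m is small
      have ht1 : pnorm S' (y - T (s m)) w₂ < ε/2 := by
        rw [← he_eq m]
        have hW : w₂ ≤ Wk m := by
          calc w₂ ≤ wseqn K₃ := hK₃
            _ ≤ wseqn m := wseqn_mono hmK₃
            _ ≤ Wk m := le_max_right _ _
        have h5 : pnorm S' (e m) w₂ ≤ pnorm S' (e m) (Wk m) :=
          pnorm_mono_w S' _ hw₂.1 hW (hWkm m).2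
        have h6 : Rk m ≤ ((m:ℝ) + 1)⁻¹ := min_le_right _ _
        have h7 : ((m:ℝ) + 1)⁻¹ < ε/2 := by
          have hK₄m : 2/ε < (m:ℝ) + 1 := by
            have : (K₄:ℝ) ≤ (m:ℝ) := Nat.cast_le.2 hmK₄
            linarith
          rw [inv_lt_comm₀ (by positivity) (by linarith), inv_div]
          exact hK₄m
        linarith [inv m]
      -- term 2 : T (s m) - T p is small
      have ht2 : pnorm S' (T (s m) - T p) w₂ < ε/2 := by
        rw [← map_sub]
        exact hT3 _ (hN₂ m hmN₂)
      have h8 : pnorm S' (y - T p) w₂ ≤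
          pnorm S' (y - T (s m)) w₂ + pnorm S' (T (s m) - T p) w₂ := by
        have := pnorm_add_le S' (y - T (s m)) (T (s m) - T p) hw₂
        simpa using this
      linarith
    exact absurd (hsmall _ hpos) (lt_irrefl _)
  exact ⟨p, hpr, hTp⟩

end Series

/-- Bounded inverse theorem for PN-spaces: the inverse of a continuous linear bijection
between strongly complete Šerstnev PN-spaces is continuous. -/
theorem spn_bounded_inverse {V W : Type*} [AddCommGroup V] [Module ℝ V]
    [AddCommGroup W] [Module ℝ W]
    (S : SPN V) (S' : SPN W) (hV : StrongComplete S) (hW : StrongComplete S')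
    (T : V →ₗ[ℝ] W) (hbij : Function.Bijective T)
    (hTc : @Continuous V W (strongTop S) (strongTop S') T) :
    @Continuous W V (strongTop S') (strongTop S) (Equiv.ofBijective T hbij).symm := by
  letI tV : TopologicalSpace V := strongTop S
  letI tW : TopologicalSpace W := strongTop S'
  have Hopen : ∀ s : Set W, IsOpen s ↔ ∀ x ∈ s, ∃ ε > 0, ∀ y, mdist S' x y < ε → y ∈ s := by
    intro s
    rw [show (IsOpen s) = IsOpen[strongTop S'] s from rfl, strong_isOpen_iff]
    constructor
    · intro h x hx
      obtain ⟨w, hw, r, hr, hsub⟩ := h x hx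
      obtain ⟨n, hn⟩ := exists_wseqn_ge hw.2
      have hmin : (0:ℝ) < min 1 r := lt_min one_pos hr
      refine ⟨(2:ℝ)⁻¹ ^ n * min 1 r, by positivity, fun y hy => ?_⟩
      have h1 : pnorm S' (x - y) (wseqn n) < r := pnorm_lt_of_mdist_lt S' hy
      apply hsub
      show pnorm S' (y - x) w < r
      calc pnorm S' (y - x) w ≤ pnorm S' (y - x) (wseqn n) :=
            pnorm_mono_w S' _ hw.1 hn (wseqn_mem n).2
        _ = pnorm S' (x - y) (wseqn n) := by
            rw [show y - x = -(x - y) by abel, pnorm_neg S' _ (wseqn_mem n)]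
        _ < r := h1
    · intro h p hp
      obtain ⟨ε, hε, hsub⟩ := h p hp
      obtain ⟨n, δ, hδ, hnd⟩ := mdist_lt_of_pnorm S' hε
      refine ⟨wseqn n, wseqn_mem n, δ, hδ, fun y hy => ?_⟩
      apply hsub
      apply hnd
      rw [show p - y = -(y - p) by abel, pnorm_neg S' _ (wseqn_mem n)]
      exact hy
  letI mW : PseudoMetricSpace W :=
    PseudoMetricSpace.ofDistTopology (mdist S') (mdist_self S') (mdist_comm S')
      (mdist_triangle S') Hopen
  haveI : CompleteSpace W := by
    apply Metric.complete_of_cauchySeq_tendsto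
    intro u hu
    have hsc : StrongCauchy S' u := by
      intro t ht
      obtain ⟨K, hK⟩ := exists_wseqn_ge (max_mem_Ioo ht).2
      have hmin : (0:ℝ) < min 1 t := lt_min one_pos ht
      obtain ⟨N, hN⟩ := (Metric.cauchySeq_iff.mp hu) ((2:ℝ)⁻¹ ^ K * min 1 t) (by positivity)
      refine ⟨N, fun m hm n hn => ?_⟩
      apply nu_form_of_pnorm S' ht
      have hd : mdist S' (u n) (u m) < (2:ℝ)⁻¹ ^ K * min 1 t := hN n hn m hm
      have h1 : pnorm S' (u n - u m) (wseqn K) < t := pnorm_lt_of_mdist_lt S' hd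
      exact lt_of_le_of_lt
        (pnorm_mono_w S' _ (max_mem_Ioo ht).1 hK (wseqn_mem K).2) h1
    obtain ⟨p, hp⟩ := hW u hsc
    refine ⟨p, ?_⟩
    rw [Metric.tendsto_atTop]
    intro ε hε
    obtain ⟨n₀, δ, hδ, hnd⟩ := mdist_lt_of_pnorm S' hε
    obtain ⟨N, hN⟩ := hp (min (δ/2) ((1 - wseqn n₀)/2)) (min_pos hδ (wseqn_mem n₀).2)
    refine ⟨N, fun n hn => ?_⟩
    have h1 : pnorm S' (u n - p) (wseqn n₀) < δ :=
      pnorm_of_nu_form S' (wseqn_mem n₀) hδ (hN n hn)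
    exact hnd (u n) p h1
  haveI hBaire : BaireSpace W := inferInstance
  have hclos : ∀ w ∈ Ioo (0:ℝ) 1, ∀ ρ > 0, ∃ w' ∈ Ioo (0:ℝ) 1, ∃ r' > 0, ∀ u : W,
      pnorm S' u w' < r' → u ∈ @closure W (strongTop S') (T '' {x | pnorm S x w < ρ}) :=
    fun w hw ρ hρ => baire_lemma S S' T hbij.2 hBaire hw hρ
  have hcont := cont_at_zero S S' T hTc
  refine continuous_def.mpr (fun U hU => ?_)
  have himg : (Equiv.ofBijective T hbij).symm ⁻¹' U = T '' U := by
    rw [← Equiv.image_eq_preimage_symm]; rfl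
  rw [himg]
  rw [show (IsOpen (T '' U)) = IsOpen[strongTop S'] (T '' U) from rfl, strong_isOpen_iff]
  rintro q ⟨x₀, hx₀U, rfl⟩
  obtain ⟨w, hw, r, hr, hsub⟩ := (strong_isOpen_iff S U).mp hU x₀ hx₀U
  obtain ⟨w', hw', r', hr', hy⟩ := series_lemma S S' T hV hcont hclos hw hr
  refine ⟨w', hw', r', hr', fun z hz => ?_⟩
  obtain ⟨x, hxw, hTx⟩ := hy (z - T x₀) hz
  refine ⟨x₀ + x, hsub ?_, ?_⟩
  · show pnorm S ((x₀ + x) - x₀) w < r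
    rwa [add_sub_cancel_left]
  · rw [map_add, hTx]; abel
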